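/- (Konno–Kuroda formula with several channels) Let H₀ be self-adjoint on ℋ, A_i : ℋ → 𝒦_i bounded for i = 1,…,n, g ∈ ℝ \ {0}, and H_g = H₀ − g Σ_{i=1}^n A_i* A_i. For all z ∈ ρ(H₀) ∩ ρ(H_g), R_{H_g}(z) = R_{H₀}(z) + g Σ_{i,j=1}^n R_{H₀}(z) A_i* [Λ(z)^{-1}]_{ij} A_j R_{H₀}(z), where Λ(z)_{ij} = δ_{ij} − g A_i R_{H₀}(z) A_j* : 𝒦_j → 𝒦_i. -/

import Mathlib

open MeasureTheory

/-- Konno–Kuroda formula with several channels: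
`R_{H_g}(z) = R_{H₀}(z) + g Σ_{i,j} R_{H₀}(z) A_i* [Λ(z)⁻¹]_{ij} A_j R_{H₀}(z)`, where
`Λ(z)_{ij} = δ_{ij} − g A_i R_{H₀}(z) A_j*` and `H_g = H₀ − g Σ_i A_i* A_i`. -/
theorem stmt_4 {H K : Type*} [NormedAddCommGroup H] [InnerProductSpace ℂ H] [CompleteSpace H]
    [NormedAddCommGroup K] [InnerProductSpace ℂ K] [CompleteSpace K]
    {n : ℕ}
    (H0 : H →ₗ[ℂ] H) (hsym : ∀ x y : H, (inner ℂ (H0 x) y : ℂ) = inner ℂ x (H0 y))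
    (A : Fin n → (H →L[ℂ] K)) (g : ℝ) (hg : g ≠ 0) (z : ℂ)
    (Hg : H →ₗ[ℂ] H)
    (hHg : ∀ x, Hg x = H0 x - (g : ℂ) • ∑ i, ContinuousLinearMap.adjoint (A i) ((A i) x))
    (R0 Rg : H →L[ℂ] H)
    (hR0₁ : ∀ x, H0 (R0 x) - z • (R0 x) = x) (hR0₂ : ∀ x, R0 (H0 x - z • x) = x)
    (hRg₁ : ∀ x, Hg (Rg x) - z • (Rg x) = x) (hRg₂ : ∀ x, Rg (Hg x - z • x) = x)
    (Λ B : Fin n → Fin n → (K →L[ℂ] K))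
    (hΛ : ∀ i j, Λ i j = (if i = j then (1 : K →L[ℂ] K) else 0)
      - (g : ℂ) • ((A i) ∘L R0 ∘L ContinuousLinearMap.adjoint (A j)))
    (hB₁ : ∀ i j, ∑ k, (Λ i k) ∘L (B k j) = if i = j then (1 : K →L[ℂ] K) else 0)
    (hB₂ : ∀ i j, ∑ k, (B i k) ∘L (Λ k j) = if i = j then (1 : K →L[ℂ] K) else 0) :
    ∀ x, Rg x = R0 x +
      (g : ℂ) • ∑ i, ∑ j, R0 (ContinuousLinearMap.adjoint (A i) ((B i j) ((A j) (R0 x)))) := by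
  intro x
  set w : Fin n → Fin n → K := fun i j => (B i j) ((A j) (R0 x)) with hw
  set v : Fin n → Fin n → H := fun i j => ContinuousLinearMap.adjoint (A i) (w i j) with hv
  set Y : H := R0 x + (g : ℂ) • ∑ i, ∑ j, R0 (v i j) with hYdef
  have hδ : ∀ k i (u : K), (g : ℂ) • (A k) (R0 ((ContinuousLinearMap.adjoint (A i)) u))
      = (if k = i then u else 0) - (Λ k i) u := by
    intro k i u
    have h := congrArg (fun f : K →L[ℂ] K => f u) (hΛ k i)
    simp only [ContinuousLinearMap.sub_apply, ContinuousLinearMap.smul_apply,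
      ContinuousLinearMap.comp_apply] at h
    rw [h]
    by_cases hki : k = i <;> simp [hki]
  have hΛB : ∀ k j (u : K), ∑ i, (Λ k i) ((B i j) u) = if k = j then u else 0 := by
    intro k j u
    have h := congrArg (fun f : K →L[ℂ] K => f u) (hB₁ k j)
    simp only [ContinuousLinearMap.sum_apply, ContinuousLinearMap.comp_apply] at h
    rw [h]
    by_cases hkj : k = j <;> simp [hkj]
  have hAkY : ∀ k, (A k) Y = (A k) (R0 x) + ∑ i, ∑ j,
      ((if k = i then w i j else 0) - (Λ k i) (w i j)) := by
    intro k
    rw [hYdef, map_add, _root_.map_smul, map_sum]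
    congr 1
    rw [Finset.smul_sum]
    refine Finset.sum_congr rfl fun i _ => ?_
    rw [map_sum, Finset.smul_sum]
    exact Finset.sum_congr rfl fun j _ => hδ k i (w i j)
  have claim2 : ∑ k, ContinuousLinearMap.adjoint (A k) ((A k) Y) = ∑ i, ∑ j, v i j := by
    refine Finset.sum_congr rfl fun k _ => ?_
    rw [hAkY k]
    have hsplit : ∑ i, ∑ j, ((if k = i then w i j else 0) - (Λ k i) (w i j))
        = (∑ j, w k j) - (A k) (R0 x) := by
      rw [Finset.sum_comm]
      have : ∀ j, ∑ i, ((if k = i then w i j else 0) - (Λ k i) (w i j))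
          = w k j - (if k = j then (A j) (R0 x) else 0) := by
        intro j
        rw [Finset.sum_sub_distrib]
        congr 1
        · simp
        · exact hΛB k j ((A j) (R0 x))
      rw [Finset.sum_congr rfl fun j _ => this j, Finset.sum_sub_distrib]
      congr 1
      simp
    rw [hsplit, map_add, map_sub, map_sum]
    abel
  have e1 : H0 Y - z • Y = x + (g : ℂ) • ∑ i, ∑ j, v i j := by
    have step : H0 Y - z • Y = (H0 (R0 x) - z • R0 x)
        + (g : ℂ) • ∑ i, ∑ j, (H0 (R0 (v i j)) - z • R0 (v i j)) := by
      rw [hYdef]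
      simp only [map_add, _root_.map_smul, map_sum, Finset.sum_sub_distrib, ← Finset.smul_sum]
      module
    rw [step, hR0₁]
    congr 2
    exact Finset.sum_congr rfl fun i _ => Finset.sum_congr rfl fun j _ => hR0₁ (v i j)
  have key : Hg Y - z • Y = x := by
    rw [hHg Y, claim2]
    have : H0 Y - (g : ℂ) • ∑ i, ∑ j, v i j - z • Y
        = (H0 Y - z • Y) - (g : ℂ) • ∑ i, ∑ j, v i j := by module
    rw [this, e1]
    module
  have := hRg₂ Y
  rw [key] at this
  exact this
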